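/- Let M ≥ 1, λ > 1, 0 ≤ ε < λ−1. If a nontrivial element u ∈ F_N is such that the orbit Out(F_N)[u] contains some (M,λ,ε)-minimal conjugacy class, then every Out(F_N)-minimal element [u'] of the orbit Out(F_N)[u] is itself (M,λ,ε)-minimal. -/
import Mathlib


/-- `(M,λ,ε)`-minimizing set, in the abstract model where `G = Out(F_N)` acts
on the set `C` of conjugacy classes and `len = ‖·‖_A`. -/
def IsMinimizingSet (G : Type*) {C : Type*} [Group G] [MulAction G C]
    (len : C → ℕ) (M : ℕ) (lam eps : ℝ) (S : Finset C) : Prop :=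
  (∀ u ∈ S, 0 < len u) ∧
  S.card ≤ M ∧
  (∀ u ∈ S, ∀ u' ∈ S, ∃ φ : G, φ • u = u') ∧
  (∀ u ∈ S, ∀ u' ∈ S,
      (1 - eps) * (len u : ℝ) ≤ (len u' : ℝ) ∧ (len u' : ℝ) ≤ (1 + eps) * (len u : ℝ)) ∧
  (∀ u ∈ S, ∀ φ : G, φ • u ∉ S → lam * (len u : ℝ) ≤ (len (φ • u) : ℝ))

/-- A conjugacy class is `(M,λ,ε)`-minimal if it lies in some
`(M,λ,ε)`-minimizing set. -/
def IsMinimalClass (G : Type*) {C : Type*} [Group G] [MulAction G C]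
    (len : C → ℕ) (M : ℕ) (lam eps : ℝ) (u : C) : Prop :=
  ∃ S : Finset C, IsMinimizingSet G len M lam eps S ∧ u ∈ S

/-- `[u]` is `Out(F_N)`-minimal if no element of `Out(F_N)` decreases its
length. -/
def IsOutMinimal (G : Type*) {C : Type*} [Group G] [MulAction G C]
    (len : C → ℕ) (u : C) : Prop :=
  ∀ φ : G, len u ≤ len (φ • u)

/-- if the orbit `Out(F_N)[u]` of a nontrivial class `[u]`
contains some `(M,λ,ε)`-minimal class, then every `Out(F_N)`-minimal element
of that orbit is itself `(M,λ,ε)`-minimal. -/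
theorem stmt5 {G C : Type*} [Group G] [MulAction G C]
    (len : C → ℕ) (M : ℕ) (lam eps : ℝ)
    (hM : 1 ≤ M) (hlam : 1 < lam) (heps0 : 0 ≤ eps) (heps : eps < lam - 1)
    (u : C) (hpos : 0 < len u)
    (h : ∃ v : C, (∃ φ : G, φ • u = v) ∧ IsMinimalClass G len M lam eps v) :
    ∀ u' : C, (∃ φ : G, φ • u = u') → IsOutMinimal G len u' →
      IsMinimalClass G len M lam eps u' := by
  rintro u' ⟨φ₂, hφ₂⟩ hmin
  obtain ⟨v, ⟨φ₁, hφ₁⟩, S, hS, hvS⟩ := h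
  refine ⟨S, hS, ?_⟩
  by_contra hu'
  -- u' = (φ₂ * φ₁⁻¹) • v
  have hkey : (φ₂ * φ₁⁻¹) • v = u' := by
    rw [← hφ₁, ← hφ₂, smul_smul]; congr 1; group
  obtain ⟨hposS, -, -, -, hjump⟩ := hS
  have h1 : lam * (len v : ℝ) ≤ (len u' : ℝ) := by
    have := hjump v hvS (φ₂ * φ₁⁻¹) (by rw [hkey]; exact hu')
    rwa [hkey] at this
  have h2 : len u' ≤ len v := by
    have := hmin (φ₁ * φ₂⁻¹)
    have hv : (φ₁ * φ₂⁻¹) • u' = v := by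
      rw [← hφ₁, ← hφ₂, smul_smul]; congr 1; group
    rwa [hv] at this
  have hvpos : (0 : ℝ) < (len v : ℝ) := by exact_mod_cast hposS v hvS
  have : lam * (len v : ℝ) ≤ (len v : ℝ) := h1.trans (by exact_mod_cast h2)
  nlinarith
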